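/- For every integer k ≥ 1, the quantum transition capacity of turning a database with no 0-preimage into one with a 0-preimage by one k-parallel query satisfies ⟦¬PRMG → PRMG⟧_k ≤ √(10·k/M). -/

import Mathlib

noncomputable section

/- `Ȳ = Y ∪ {⊥}` is modeled by `Option Y` (`⊥ = none`), databases by `X → Option Y`,
and `ℂ[DB]` by `EuclideanSpace ℂ (X → Option Y)`. -/

/-- matrix (in the computational basis) of the single-register unitary `Comp` -/
def compMat (Y : Type*) [Fintype Y] [DecidableEq Y] :
    Matrix (Option Y) (Option Y) ℂ :=
  Matrix.of fun u v =>
    match u, v with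
    | none, none => 0
    | some _, none => ((Real.sqrt (Fintype.card Y) : ℝ) : ℂ)⁻¹
    | none, some _ => ((Real.sqrt (Fintype.card Y) : ℝ) : ℂ)⁻¹
    | some a, some b => (if a = b then (1 : ℂ) else 0) - ((Fintype.card Y : ℕ) : ℂ)⁻¹

/-- matrix of the diagonal unitary `O_ŷ` associated to a character `ŷ` of `Y` -/
def oMat {Y : Type*} [Fintype Y] [DecidableEq Y] [AddCommGroup Y] (c : AddChar Y ℂ) :
    Matrix (Option Y) (Option Y) ℂ :=
  Matrix.diagonal fun u => Option.elim u 1 fun r => c r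

/-- matrix of the single-register compressed oracle `cO_ŷ = Comp ∘ O_ŷ ∘ Comp` -/
def cOMat {Y : Type*} [Fintype Y] [DecidableEq Y] [AddCommGroup Y] (c : AddChar Y ℂ) :
    Matrix (Option Y) (Option Y) ℂ :=
  compMat Y * oMat c * compMat Y

/-- a single-register operator (given by its matrix `m`) acting at register `x0` -/
def liftMat {X Y : Type*} [Fintype X] [DecidableEq X] [DecidableEq Y] (x0 : X)
    (m : Matrix (Option Y) (Option Y) ℂ) :
    Matrix (X → Option Y) (X → Option Y) ℂ :=
  Matrix.of fun D' D => if ∀ a, a ≠ x0 → D' a = D a then m (D' x0) (D x0) else 0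

/-- matrix of `cO_{x,ŷ}`: the composition of `cO_{ŷ i}` acting at register `x i` -/
def cOparMat {X Y : Type*} [Fintype X] [DecidableEq X] [Fintype Y] [DecidableEq Y]
    [AddCommGroup Y] {k : ℕ} (x : Fin k → X) (c : Fin k → AddChar Y ℂ) :
    Matrix (X → Option Y) (X → Option Y) ℂ :=
  (List.ofFn fun i : Fin k => liftMat (x i) (cOMat (c i))).prod

/-- matrix of the orthogonal projection onto `span{e_D : D ∈ P}` -/
def projMat {ι : Type*} [DecidableEq ι] (P : Set ι) : Matrix ι ι ℂ := by
  classical exact Matrix.of fun i j => if i = j ∧ i ∈ P then 1 else 0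

/-- the (continuous linear) operator on `ℓ²` given by a matrix -/
def toOp {ι : Type*} [Fintype ι] [DecidableEq ι] (m : Matrix ι ι ℂ) :
    EuclideanSpace ℂ ι →L[ℂ] EuclideanSpace ℂ ι :=
  LinearMap.toContinuousLinearMap (Matrix.toEuclideanLin m)

/-- `D|^x`: the set of databases that coincide with `D` outside of `x` -/
def agreeOff {X Y : Type*} {k : ℕ} (D : X → Option Y) (x : Fin k → X) :
    Set (X → Option Y) :=
  {D' | ∀ a : X, (∀ i, x i ≠ a) → D' a = D a}

/-- The quantum transition capacity `⟦P → P' | X₀⟧_k`: the supremum, over all `x ∈ X₀^k`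
with pairwise distinct entries, all `k`-tuples `ŷ` of characters of `Y` and all databases `D`,
of `‖P'|_{D|^x} ∘ cO_{x,ŷ} ∘ P|_{D|^x}‖` (`0` if the range is empty). -/
def qtc {X Y : Type*} [Fintype X] [DecidableEq X] [Fintype Y] [DecidableEq Y]
    [AddCommGroup Y] (P P' : Set (X → Option Y)) (k : ℕ) (X₀ : Set X) : ℝ :=
  sSup {v : ℝ | ∃ (x : Fin k → X) (c : Fin k → AddChar Y ℂ) (D : X → Option Y),
    Function.Injective x ∧ (∀ i, x i ∈ X₀) ∧
    v = ‖(toOp (projMat (P' ∩ agreeOff D x))).comp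
          ((toOp (cOparMat x c)).comp (toOp (projMat (P ∩ agreeOff D x))))‖}

end

/-- `PRMG`: databases containing a `0`-preimage -/
def PRMG {X Y : Type*} [AddCommGroup Y] : Set (X → Option Y) :=
  {D | ∃ a : X, D a = some 0}


noncomputable section Chunks
set_option linter.unusedSectionVars false
open Matrix
variable {ι : Type*} [Fintype ι] [DecidableEq ι]

lemma projMat_apply (P : Set ι) (i j : ι) [Decidable (i ∈ P)] :
    projMat P i j = if i = j ∧ i ∈ P then 1 else 0 := by
  rw [projMat]; dsimp only [Matrix.of_apply]; congr

lemma projMat_empty : projMat (∅ : Set ι) = 0 := by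
  classical
  ext i j; rw [projMat_apply]; simp

lemma projMat_mul_apply (P : Set ι) (C : Matrix ι ι ℂ) (i j : ι) [Decidable (i ∈ P)] :
    (projMat P * C) i j = if i ∈ P then C i j else 0 := by
  classical
  rw [Matrix.mul_apply]
  rw [Finset.sum_eq_single i]
  · rw [projMat_apply]; by_cases h : i ∈ P <;> simp [h]
  · intro b _ hb; rw [projMat_apply]; simp [Ne.symm hb]
  · simp
lemma mul_projMat_apply (P : Set ι) (C : Matrix ι ι ℂ) (i j : ι) [Decidable (j ∈ P)] :
    (C * projMat P) i j = if j ∈ P then C i j else 0 := by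
  classical
  rw [Matrix.mul_apply]
  rw [Finset.sum_eq_single j]
  · rw [projMat_apply]; by_cases h : j ∈ P <;> simp [h]
  · intro b _ hb; rw [projMat_apply]; simp [hb]
  · simp

lemma projMat_absorb_left {S T : Set ι} (h : S ⊆ T) :
    projMat T * projMat S = projMat S := by
  classical
  ext i j; rw [projMat_mul_apply, projMat_apply]
  by_cases hT : i ∈ T
  · simp [hT]
  · have hs : i ∉ S := fun hs => hT (h hs); simp [hT, hs]

lemma projMat_absorb_right {S T : Set ι} (h : S ⊆ T) :
    projMat S * projMat T = projMat S := by
  classical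
  ext i j; rw [mul_projMat_apply, projMat_apply]
  by_cases hT : j ∈ T
  · simp [hT]
  · rw [if_neg hT, if_neg]; rintro ⟨rfl, hs⟩; exact hT (h hs)

lemma projMat_iUnion {n : ℕ} (S : Fin n → Set ι)
    (hdisj : ∀ i j, i ≠ j → S i ∩ S j = ∅) :
    projMat (⋃ i, S i) = ∑ i, projMat (S i) := by
  classical
  ext a b
  rw [projMat_apply, Matrix.sum_apply]
  by_cases hab : a = b
  · subst hab
    by_cases hm : ∃ i, a ∈ S i
    · obtain ⟨i0, hi0⟩ := hm
      rw [Finset.sum_eq_single i0]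
      · simp [projMat_apply, hi0, Set.mem_iUnion]
        exact ⟨i0, hi0⟩
      · intro b _ hb
        rw [projMat_apply]
        suffices h : a ∉ S b by simp [h]
        intro hc
        have := hdisj b i0 hb
        exact absurd (Set.mem_inter hc hi0) (by rw [this]; simp)
      · simp
    · push_neg at hm
      have : a ∉ ⋃ i, S i := by simpa using hm
      simp only [this, and_false, if_false]
      symm; apply Finset.sum_eq_zero
      intro i _; rw [projMat_apply]; simp [hm i]
  · simp only [hab, false_and, if_false]
    symm; apply Finset.sum_eq_zero
    intro i _; rw [projMat_apply]; simp [hab]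

section C3
open Matrix
variable {X Y : Type*} [Fintype X] [DecidableEq X] [Fintype Y] [DecidableEq Y]

/-- helper: sum over updates -/
lemma sum_update (x0 : X) (D : X → Option Y) (g : Option Y → ℂ) :
    ∑ E : X → Option Y, (if ∀ a, a ≠ x0 → E a = D a then g (E x0) else 0)
      = ∑ b : Option Y, g b := by
  classical
  rw [Finset.sum_ite, Finset.sum_const_zero, add_zero]
  apply Finset.sum_nbij' (i := fun E => E x0) (j := fun b => Function.update D x0 b)
  · intro E hE; simp
  · intro b _; simp only [Finset.mem_filter, Finset.mem_univ, true_and]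
    intro a ha; rw [Function.update_of_ne ha]
  · intro E hE
    simp only [Finset.mem_filter, Finset.mem_univ, true_and] at hE
    funext a
    by_cases ha : a = x0
    · subst ha; rw [Function.update_self]
    · rw [Function.update_of_ne ha]; exact (hE a ha).symm
  · intro b _; rw [Function.update_self]
  · intro E _; rfl

lemma liftMat_mul (x0 : X) (m m' : Matrix (Option Y) (Option Y) ℂ) :
    liftMat x0 m * liftMat x0 m' = liftMat x0 (m * m') := by
  classical
  ext D' D
  rw [Matrix.mul_apply]
  simp only [liftMat, Matrix.of_apply]
  by_cases hA : ∀ a, a ≠ x0 → D' a = D a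
  · rw [if_pos hA, Matrix.mul_apply]
    rw [← sum_update x0 D (fun b => m (D' x0) b * m' b (D x0))]
    apply Finset.sum_congr rfl
    intro E _
    by_cases hE : ∀ a, a ≠ x0 → E a = D a
    · have hE' : ∀ a, a ≠ x0 → D' a = E a := fun a ha => by rw [hA a ha, hE a ha]
      rw [if_pos hE, if_pos hE', if_pos hE]
    · have hE' : ¬ ∀ a, a ≠ x0 → D' a = E a :=
        fun h' => hE fun a ha => by rw [← h' a ha, hA a ha]
      simp [hE, hE']
  · rw [if_neg hA]
    apply Finset.sum_eq_zero
    intro E _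
    by_cases h1 : ∀ a, a ≠ x0 → D' a = E a
    · by_cases h2 : ∀ a, a ≠ x0 → E a = D a
      · exact absurd (fun a ha => (h1 a ha).trans (h2 a ha)) hA
      · rw [if_neg h2, mul_zero]
    · rw [if_neg h1, zero_mul]

lemma liftMat_one (x0 : X) : liftMat (Y := Y) x0 1 = 1 := by
  classical
  ext D' D
  simp only [liftMat, Matrix.of_apply]
  by_cases hA : ∀ a, a ≠ x0 → D' a = D a
  · rw [if_pos hA]
    by_cases h : D' = D
    · subst h; simp [Matrix.one_apply]
    · rw [Matrix.one_apply, Matrix.one_apply, if_neg h, if_neg]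
      intro he
      exact h (funext fun a => by
        by_cases ha : a = x0
        · subst ha; exact he
        · exact hA a ha)
  · rw [if_neg hA, Matrix.one_apply, if_neg]
    intro he; subst he; exact hA fun a _ => rfl

lemma liftMat_smul (x0 : X) (s : ℂ) (m : Matrix (Option Y) (Option Y) ℂ) :
    liftMat x0 (s • m) = s • liftMat x0 m := by
  ext D' D
  simp only [liftMat, Matrix.of_apply, Matrix.smul_apply, smul_eq_mul]
  split <;> simp

lemma liftMat_conjTranspose (x0 : X) (m : Matrix (Option Y) (Option Y) ℂ) :
    (liftMat x0 m)ᴴ = liftMat x0 mᴴ := by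
  ext D' D
  simp only [Matrix.conjTranspose_apply, liftMat, Matrix.of_apply]
  by_cases h : ∀ a, a ≠ x0 → D' a = D a
  · rw [if_pos h, if_pos fun a ha => (h a ha).symm]

  · rw [if_neg h, if_neg, star_zero]
    intro h'; exact h fun a ha => (h' a ha).symm

lemma liftMat_mul_ne (x0 x1 : X) (hne : x0 ≠ x1) (m m' : Matrix (Option Y) (Option Y) ℂ) :
    liftMat x0 m * liftMat x1 m' = Matrix.of fun D' D =>
      if ∀ a, a ≠ x0 → a ≠ x1 → D' a = D a
      then m (D' x0) (D x0) * m' (D' x1) (D x1) else 0 := by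
  classical
  ext D' D
  rw [Matrix.mul_apply]
  simp only [liftMat, Matrix.of_apply]
  rw [Finset.sum_eq_single (Function.update D' x0 (D x0))]
  · have h1 : ∀ a, a ≠ x0 → D' a = Function.update D' x0 (D x0) a := by
      intro a ha; rw [Function.update_of_ne ha]
    rw [if_pos h1, Function.update_self, Function.update_of_ne (Ne.symm hne)]
    by_cases h2 : ∀ a, a ≠ x0 → a ≠ x1 → D' a = D a
    · have hc : ∀ a, a ≠ x1 → Function.update D' x0 (D x0) a = D a := by
        intro a ha1
        by_cases ha0 : a = x0
        · subst ha0; rw [Function.update_self]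
        · rw [Function.update_of_ne ha0]; exact h2 a ha0 ha1
      rw [if_pos hc, if_pos h2]
    · have hc : ¬ ∀ a, a ≠ x1 → Function.update D' x0 (D x0) a = D a := by
        intro hc; exact h2 fun a ha0 ha1 => by
          rw [← hc a ha1, Function.update_of_ne ha0]
      rw [if_neg hc, if_neg h2, mul_zero]
  · intro E _ hE
    by_cases hc1 : ∀ a, a ≠ x0 → D' a = E a
    · by_cases hc2 : ∀ a, a ≠ x1 → E a = D a
      · exfalso; apply hE
        funext a
        by_cases ha : a = x0
        · rw [ha, Function.update_self]; exact hc2 x0 hne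
        · rw [Function.update_of_ne ha]; exact (hc1 a ha).symm
      · rw [if_neg hc2, mul_zero]
    · rw [if_neg hc1, zero_mul]
  · simp

lemma liftMat_commute (x0 x1 : X) (hne : x0 ≠ x1) (m m' : Matrix (Option Y) (Option Y) ℂ) :
    Commute (liftMat x0 m) (liftMat x1 m') := by
  unfold Commute SemiconjBy
  rw [liftMat_mul_ne x0 x1 hne, liftMat_mul_ne x1 x0 hne.symm]
  ext D' D
  simp only [Matrix.of_apply]
  have hiff : (∀ a, a ≠ x0 → a ≠ x1 → D' a = D a) ↔ (∀ a, a ≠ x1 → a ≠ x0 → D' a = D a) :=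
    ⟨fun h a h1 h0 => h a h0 h1, fun h a h0 h1 => h a h1 h0⟩
  by_cases h : ∀ a, a ≠ x0 → a ≠ x1 → D' a = D a
  · rw [if_pos h, if_pos (hiff.mp h)]; ring
  · rw [if_neg h, if_neg (fun hc => h (hiff.mpr hc))]

end C3
section C4
open Matrix
variable {Y : Type*} [Fintype Y] [DecidableEq Y] [AddCommGroup Y]

lemma card_pos : 0 < (Fintype.card Y : ℝ) := by
  have : Nonempty Y := ⟨0⟩
  exact_mod_cast Fintype.card_pos

lemma sqrt_card_mul_self :
    ((Real.sqrt (Fintype.card Y) : ℝ) : ℂ)⁻¹ * ((Real.sqrt (Fintype.card Y) : ℝ) : ℂ)⁻¹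
      = ((Fintype.card Y : ℕ) : ℂ)⁻¹ := by
  rw [← mul_inv, ← Complex.ofReal_mul, Real.mul_self_sqrt (by positivity)]
  push_cast
  ring

lemma compMat_conjTranspose : (compMat Y)ᴴ = compMat Y := by
  ext u v
  rcases u with _ | a <;> rcases v with _ | b <;>
    simp only [Matrix.conjTranspose_apply, compMat, Matrix.of_apply, star_zero, star_sub,
      star_inv₀, RCLike.star_def, Complex.conj_ofReal, map_natCast]
  by_cases h : a = b
  · subst h; simp
  · rw [if_neg (Ne.symm h), if_neg h]; simp

lemma compMat_mul_self : compMat Y * compMat Y = 1 := by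
  have hM : ((Fintype.card Y : ℕ) : ℂ) ≠ 0 := by
    exact_mod_cast (by positivity : (0:ℝ) < (Fintype.card Y:ℝ)).ne'
  ext u v
  rw [Matrix.mul_apply, Fintype.sum_option]
  rcases u with _ | a <;> rcases v with _ | b <;>
    simp only [compMat, Matrix.of_apply, Matrix.one_apply]
  · simp only [mul_zero, zero_add]
    rw [Finset.sum_congr rfl (fun r _ => sqrt_card_mul_self)]
    simp [Finset.card_univ, hM]
  · simp only [zero_mul, zero_add, if_neg (Option.some_ne_none b).symm]
    rw [Finset.sum_congr rfl (fun r _ => by rw [mul_sub, mul_ite, mul_one, mul_zero])]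
    rw [Finset.sum_sub_distrib, Finset.sum_ite_eq' Finset.univ b]
    simp only [Finset.mem_univ, if_true, Finset.sum_const, Finset.card_univ, nsmul_eq_mul]
    rw [mul_left_comm, mul_inv_cancel₀ hM, mul_one, sub_self]
  · simp only [mul_zero, if_neg (Option.some_ne_none a)]
    rw [Finset.sum_congr rfl (fun r _ => by rw [sub_mul, ite_mul, one_mul, zero_mul])]
    rw [Finset.sum_sub_distrib, Finset.sum_ite_eq Finset.univ a]
    simp only [Finset.mem_univ, if_true, Finset.sum_const, Finset.card_univ, nsmul_eq_mul]
    rw [zero_add, ← mul_assoc, mul_inv_cancel₀ hM, one_mul, sub_self]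
  · rw [sqrt_card_mul_self]
    have hexp : ∀ r : Y, ((if a = r then (1:ℂ) else 0) - (Fintype.card Y : ℂ)⁻¹)
        * ((if r = b then (1:ℂ) else 0) - (Fintype.card Y : ℂ)⁻¹)
        = (if a = r then (1:ℂ) else 0) * (if r = b then (1:ℂ) else 0)
          - (if a = r then (1:ℂ) else 0) * (Fintype.card Y : ℂ)⁻¹
          - (Fintype.card Y : ℂ)⁻¹ * (if r = b then (1:ℂ) else 0)
          + (Fintype.card Y : ℂ)⁻¹ * (Fintype.card Y : ℂ)⁻¹ := fun r => by ring
    rw [Finset.sum_congr rfl (fun r _ => hexp r)]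
    rw [Finset.sum_add_distrib, Finset.sum_sub_distrib, Finset.sum_sub_distrib]
    have h1 : ∑ r : Y, (if a = r then (1:ℂ) else 0) * (if r = b then (1:ℂ) else 0)
        = if a = b then 1 else 0 := by
      rw [Finset.sum_congr rfl (fun r _ => by rw [ite_mul, one_mul, zero_mul])]
      rw [Finset.sum_ite_eq Finset.univ a]
      simp
    rw [h1]
    simp only [ite_mul, one_mul, zero_mul, mul_ite, mul_one, mul_zero]
    rw [Finset.sum_ite_eq Finset.univ a, Finset.sum_ite_eq' Finset.univ b]
    simp only [Finset.mem_univ, if_true, Finset.sum_const, Finset.card_univ, nsmul_eq_mul]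
    by_cases h : a = b <;> simp only [h, if_true, if_false] <;> field_simp <;> simp [h]

lemma addChar_star_mul (c : AddChar Y ℂ) (r : Y) : star (c r) * c r = 1 := by
  have h1 : ‖c r‖ = 1 := by
    have : Finite Y := Finite.of_fintype Y
    exact AddChar.norm_apply c r
  have := RCLike.conj_mul (K := ℂ) (c r)
  rw [h1] at this
  simpa using this

lemma oMat_unitary (c : AddChar Y ℂ) : (oMat c)ᴴ * oMat c = 1 := by
  ext u v
  rw [oMat, Matrix.diagonal_conjTranspose, Matrix.diagonal_mul_diagonal,
    Matrix.diagonal_apply, Matrix.one_apply]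
  by_cases h : u = v
  · subst h
    rcases u with _ | r
    · simp [Option.elim]
    · simp only [if_pos rfl, Pi.star_apply]
      simpa [Option.elim] using addChar_star_mul c r
  · simp [h]

lemma cOMat_unitary (c : AddChar Y ℂ) : (cOMat c)ᴴ * cOMat c = 1 := by
  rw [cOMat, Matrix.conjTranspose_mul, Matrix.conjTranspose_mul, compMat_conjTranspose]
  calc compMat Y * ((oMat c)ᴴ * compMat Y) * (compMat Y * oMat c * compMat Y)
      = compMat Y * ((oMat c)ᴴ * ((compMat Y * compMat Y) * (oMat c * compMat Y))) := by
        simp only [Matrix.mul_assoc]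
    _ = compMat Y * (((oMat c)ᴴ * oMat c) * compMat Y) := by
        rw [compMat_mul_self, Matrix.one_mul, ← Matrix.mul_assoc ((oMat c)ᴴ) (oMat c) (compMat Y)]
    _ = 1 := by rw [oMat_unitary, Matrix.one_mul, compMat_mul_self]

lemma cOMat_entry (c : AddChar Y ℂ) (u v : Option Y) :
    cOMat c u v = compMat Y u none * compMat Y none v
      + ∑ r : Y, compMat Y u (some r) * c r * compMat Y (some r) v := by
  rw [cOMat, Matrix.mul_apply, Fintype.sum_option]
  rw [oMat]
  simp only [Matrix.mul_diagonal, Option.elim]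
  congr 1
  · rw [mul_one]

lemma entry_bot (c : AddChar Y ℂ) :
    cOMat c (some 0) none
      = (1 - (∑ r : Y, c r) * ((Fintype.card Y : ℕ) : ℂ)⁻¹)
          * ((Real.sqrt (Fintype.card Y) : ℝ) : ℂ)⁻¹ := by
  rw [cOMat_entry]
  set Q : ℂ := ((Real.sqrt (Fintype.card Y) : ℝ) : ℂ)⁻¹ with hQ
  set M : ℂ := ((Fintype.card Y : ℕ) : ℂ) with hMdef
  have h0 : compMat Y (some (0:Y)) none * compMat Y none none = 0 := by
    simp [compMat]
  rw [h0, zero_add]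
  have hterm : ∀ r : Y, compMat Y (some (0:Y)) (some r) * c r * compMat Y (some r) none
      = (if (0:Y) = r then c r * Q else 0) - M⁻¹ * (c r * Q) := by
    intro r
    simp only [compMat, Matrix.of_apply, ← hQ, ← hMdef]
    by_cases h : (0:Y) = r <;> simp [h] <;> ring
  rw [Finset.sum_congr rfl fun r _ => hterm r]
  rw [Finset.sum_sub_distrib, Finset.sum_ite_eq Finset.univ (0:Y), ← Finset.mul_sum]
  simp only [Finset.mem_univ, if_true]
  rw [AddChar.map_zero_eq_one]
  rw [Finset.mul_sum]
  rw [show ∑ r : Y, M⁻¹ * (c r * Q) = (∑ r : Y, c r) * M⁻¹ * Q by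
    rw [Finset.sum_mul, Finset.sum_mul]; apply Finset.sum_congr rfl; intros; ring]
  ring

lemma entry_some (c : AddChar Y ℂ) (w : Y) (hw : w ≠ 0) :
    cOMat c (some 0) (some w)
      = ((∑ r : Y, c r) * ((Fintype.card Y : ℕ) : ℂ)⁻¹ - c w) * ((Fintype.card Y : ℕ) : ℂ)⁻¹ := by
  rw [cOMat_entry]
  set M : ℂ := ((Fintype.card Y : ℕ) : ℂ) with hMdef
  have h0 : compMat Y (some (0:Y)) none * compMat Y none (some w) = M⁻¹ := by
    simp only [compMat, Matrix.of_apply, ← hMdef]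
    exact sqrt_card_mul_self
  rw [h0]
  have hterm : ∀ r : Y, compMat Y (some (0:Y)) (some r) * c r * compMat Y (some r) (some w)
      = (if (0:Y) = r then ((if r = w then (1:ℂ) else 0) * c r) else 0)
        - (if (0:Y) = r then c r * M⁻¹ else 0)
        - (if r = w then M⁻¹ * c r else 0)
        + M⁻¹ * M⁻¹ * c r := by
    intro r
    by_cases h1 : (0:Y) = r
    · by_cases h2 : r = w
      · exact absurd (h1.trans h2) (Ne.symm hw)
      · simp only [compMat, Matrix.of_apply, ← hMdef, h1, h2, if_true, if_false]
        ring
    · by_cases h2 : r = w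
      · have h3 : ¬((0:Y) = w) := fun hh => h1 (hh.trans h2.symm)
        simp only [compMat, Matrix.of_apply, ← hMdef, h1, h2, eq_false h3, if_true, if_false]
        ring
      · simp only [compMat, Matrix.of_apply, ← hMdef, h1, h2, if_true, if_false]
        ring
  rw [Finset.sum_congr rfl fun r _ => hterm r]
  rw [Finset.sum_add_distrib, Finset.sum_sub_distrib, Finset.sum_sub_distrib]
  rw [Finset.sum_ite_eq Finset.univ (0:Y), Finset.sum_ite_eq Finset.univ (0:Y),
    Finset.sum_ite_eq' Finset.univ w, ← Finset.mul_sum]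
  simp only [Finset.mem_univ, if_true]
  rw [if_neg (fun h : (0:Y) = w => hw h.symm), AddChar.map_zero_eq_one]
  ring

lemma norm_char_sum_le (c : AddChar Y ℂ) : ‖∑ r : Y, c r‖ ≤ (Fintype.card Y : ℝ) := by
  have : Finite Y := Finite.of_fintype Y
  calc ‖∑ r : Y, c r‖ ≤ ∑ r : Y, ‖c r‖ := norm_sum_le _ _
    _ = ∑ r : Y, 1 := by apply Finset.sum_congr rfl; intros r _; exact AddChar.norm_apply c r
    _ = (Fintype.card Y : ℝ) := by simp

lemma norm_entry_bot_le (c : AddChar Y ℂ) :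
    ‖cOMat c (some 0) none‖ ≤ 2 * (Real.sqrt (Fintype.card Y))⁻¹ := by
  rw [entry_bot, norm_mul]
  have h1 : ‖((Real.sqrt (Fintype.card Y) : ℝ) : ℂ)⁻¹‖ = (Real.sqrt (Fintype.card Y))⁻¹ := by
    rw [norm_inv, Complex.norm_real, Real.norm_eq_abs, abs_of_nonneg (Real.sqrt_nonneg _)]
  rw [h1]
  have h2 : ‖1 - (∑ r : Y, c r) * ((Fintype.card Y : ℕ) : ℂ)⁻¹‖ ≤ 2 := by
    calc ‖1 - (∑ r : Y, c r) * ((Fintype.card Y : ℕ) : ℂ)⁻¹‖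
        ≤ ‖(1:ℂ)‖ + ‖(∑ r : Y, c r) * ((Fintype.card Y : ℕ) : ℂ)⁻¹‖ := norm_sub_le _ _
      _ = 1 + ‖∑ r : Y, c r‖ * ((Fintype.card Y : ℝ))⁻¹ := by
          rw [norm_one, norm_mul, norm_inv, Complex.norm_natCast]
      _ ≤ 1 + (Fintype.card Y : ℝ) * ((Fintype.card Y : ℝ))⁻¹ := by
          gcongr
          exact norm_char_sum_le c
      _ ≤ 2 := by
          rw [mul_inv_cancel₀ (card_pos (Y := Y)).ne']
          norm_num
  have h3 : (0:ℝ) ≤ (Real.sqrt (Fintype.card Y))⁻¹ := by positivity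
  calc ‖1 - (∑ r : Y, c r) * ((Fintype.card Y : ℕ) : ℂ)⁻¹‖ * (Real.sqrt (Fintype.card Y))⁻¹
      ≤ 2 * (Real.sqrt (Fintype.card Y))⁻¹ := by gcongr

lemma norm_entry_some_le (c : AddChar Y ℂ) (w : Y) (hw : w ≠ 0) :
    ‖cOMat c (some 0) (some w)‖ ≤ 2 * (Fintype.card Y : ℝ)⁻¹ := by
  rw [entry_some c w hw, norm_mul]
  have h1 : ‖((Fintype.card Y : ℕ) : ℂ)⁻¹‖ = ((Fintype.card Y : ℝ))⁻¹ := by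
    rw [norm_inv, Complex.norm_natCast]
  rw [h1]
  have h2 : ‖(∑ r : Y, c r) * ((Fintype.card Y : ℕ) : ℂ)⁻¹ - c w‖ ≤ 2 := by
    have : Finite Y := Finite.of_fintype Y
    calc ‖(∑ r : Y, c r) * ((Fintype.card Y : ℕ) : ℂ)⁻¹ - c w‖
        ≤ ‖(∑ r : Y, c r) * ((Fintype.card Y : ℕ) : ℂ)⁻¹‖ + ‖c w‖ := norm_sub_le _ _
      _ ≤ (Fintype.card Y : ℝ) * ((Fintype.card Y : ℝ))⁻¹ + 1 := by
          rw [norm_mul, h1, AddChar.norm_apply]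
          gcongr
          exact norm_char_sum_le c
      _ ≤ 2 := by
          rw [mul_inv_cancel₀ (card_pos (Y := Y)).ne']
          norm_num
  have h3 : (0:ℝ) ≤ ((Fintype.card Y : ℝ))⁻¹ := by positivity
  gcongr

lemma row_sq_bound (c : AddChar Y ℂ) :
    ‖cOMat c (some 0) none‖ ^ 2
      + ∑ w : Y, (if w = (0:Y) then 0 else ‖cOMat c (some 0) (some w)‖ ^ 2)
    ≤ 8 / (Fintype.card Y : ℝ) := by
  have hM : (0:ℝ) < (Fintype.card Y : ℝ) := card_pos
  have h1 : ‖cOMat c (some 0) none‖ ^ 2 ≤ 4 / (Fintype.card Y : ℝ) := by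
    have := norm_entry_bot_le c
    have hb : (2 * (Real.sqrt (Fintype.card Y))⁻¹) ^ 2 = 4 / (Fintype.card Y : ℝ) := by
      rw [mul_pow, ← Real.sqrt_inv]
      rw [Real.sq_sqrt (by positivity)]
      ring
    rw [← hb]
    exact pow_le_pow_left₀ (norm_nonneg _) this 2
  have h2 : ∑ w : Y, (if w = (0:Y) then 0 else ‖cOMat c (some 0) (some w)‖ ^ 2)
      ≤ 4 / (Fintype.card Y : ℝ) := by
    calc ∑ w : Y, (if w = (0:Y) then 0 else ‖cOMat c (some 0) (some w)‖ ^ 2)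
        ≤ ∑ _w : Y, 4 * ((Fintype.card Y : ℝ)⁻¹)^2 := by
          apply Finset.sum_le_sum
          intro w _
          by_cases h : w = 0
          · simp only [h, if_true]; positivity
          · rw [if_neg h]
            have := norm_entry_some_le c w h
            calc ‖cOMat c (some 0) (some w)‖ ^ 2
                ≤ (2 * (Fintype.card Y : ℝ)⁻¹) ^ 2 := pow_le_pow_left₀ (norm_nonneg _) this 2
              _ = 4 * ((Fintype.card Y : ℝ)⁻¹)^2 := by ring
      _ = (Fintype.card Y : ℝ) * (4 * ((Fintype.card Y : ℝ)⁻¹)^2) := by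
          rw [Finset.sum_const, Finset.card_univ, nsmul_eq_mul]
      _ = 4 / (Fintype.card Y : ℝ) := by
          field_simp
  have h3 : 4 / (Fintype.card Y : ℝ) + 4 / (Fintype.card Y : ℝ) = 8 / (Fintype.card Y : ℝ) := by
    ring
  linarith

end C4
end Chunks
noncomputable section Aux
open Matrix

set_option linter.unusedSectionVars false

section OpLemmas
variable {ι : Type*} [Fintype ι] [DecidableEq ι]

lemma toOp_apply (m : Matrix ι ι ℂ) (v : EuclideanSpace ℂ ι) (i : ι) :
    toOp m v i = ∑ j, m i j * v j := rfl

lemma toOp_mul (A B : Matrix ι ι ℂ) : toOp (A * B) = (toOp A).comp (toOp B) := by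
  ext v i
  show ((A * B) *ᵥ v) i = (A *ᵥ (B *ᵥ v)) i
  rw [Matrix.mulVec_mulVec]

lemma toOp_zero : toOp (0 : Matrix ι ι ℂ) = 0 := by
  ext v i; rw [toOp_apply]; simp

lemma toOp_smul (s : ℂ) (m : Matrix ι ι ℂ) : toOp (s • m) = s • toOp m := by
  ext v i
  rw [toOp_apply]
  simp only [Matrix.smul_apply, smul_eq_mul, ContinuousLinearMap.coe_smul', Pi.smul_apply]
  rw [show (s • toOp m v) i = s * toOp m v i from rfl, toOp_apply, Finset.mul_sum]
  apply Finset.sum_congr rfl; intros; ring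

lemma toOp_inner (m : Matrix ι ι ℂ) (v w : EuclideanSpace ℂ ι) :
    inner ℂ (toOp m v) w = (inner ℂ v (toOp mᴴ w) : ℂ) := by
  simp only [PiLp.inner_apply, toOp_apply, RCLike.inner_apply, Matrix.conjTranspose_apply,
    Finset.mul_sum, Finset.sum_mul, map_sum, starRingEnd_apply, star_star, mul_comm]
  rw [Finset.sum_comm]
  apply Finset.sum_congr rfl; intro i _; apply Finset.sum_congr rfl; intro j _
  rw [StarMul.star_mul]; ring

lemma toOp_sq_le (m : Matrix ι ι ℂ) (v : EuclideanSpace ℂ ι) :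
    ‖toOp m v‖ ^ 2 ≤ ‖toOp (mᴴ * m)‖ * ‖v‖ ^ 2 := by
  have h : (‖toOp m v‖ : ℝ) ^ 2 = Complex.re (inner ℂ (toOp m v) (toOp m v)) := by
    rw [← inner_self_eq_norm_sq (𝕜 := ℂ)]; rfl
  rw [h]
  have h2 : (inner ℂ (toOp m v) (toOp m v) : ℂ) = inner ℂ v (toOp (mᴴ * m) v) := by
    rw [toOp_inner, ← ContinuousLinearMap.comp_apply, ← toOp_mul]
  rw [h2]
  calc Complex.re (inner ℂ v (toOp (mᴴ * m) v))
      ≤ ‖(inner ℂ v (toOp (mᴴ * m) v) : ℂ)‖ := Complex.re_le_norm _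
    _ ≤ ‖v‖ * ‖toOp (mᴴ * m) v‖ := norm_inner_le_norm _ _
    _ ≤ ‖v‖ * (‖toOp (mᴴ * m)‖ * ‖v‖) := by
        gcongr; exact (toOp (mᴴ*m)).le_opNorm v
    _ = ‖toOp (mᴴ * m)‖ * ‖v‖ ^ 2 := by ring

lemma toOp_norm_sq_le (m : Matrix ι ι ℂ) : ‖toOp m‖ ^ 2 ≤ ‖toOp (mᴴ * m)‖ := by
  have hb : (0:ℝ) ≤ Real.sqrt ‖toOp (mᴴ * m)‖ := Real.sqrt_nonneg _
  have h1 : ‖toOp m‖ ≤ Real.sqrt ‖toOp (mᴴ * m)‖ := by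
    apply ContinuousLinearMap.opNorm_le_bound _ hb
    intro v
    have := toOp_sq_le m v
    have h0 : (0:ℝ) ≤ ‖toOp (mᴴ * m)‖ := norm_nonneg _
    nlinarith [norm_nonneg (toOp m v), norm_nonneg v,
      Real.sq_sqrt h0, Real.sqrt_nonneg ‖toOp (mᴴ * m)‖,
      mul_nonneg (Real.sqrt_nonneg ‖toOp (mᴴ * m)‖) (norm_nonneg v),
      sq_nonneg (‖toOp m v‖ - Real.sqrt ‖toOp (mᴴ * m)‖ * ‖v‖)]
  calc ‖toOp m‖ ^ 2 ≤ Real.sqrt ‖toOp (mᴴ * m)‖ ^ 2 := by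
        apply pow_le_pow_left₀ (norm_nonneg _) h1
    _ = ‖toOp (mᴴ * m)‖ := Real.sq_sqrt (norm_nonneg _)

lemma toOp_norm_le_one_of_unitary (m : Matrix ι ι ℂ) (h : mᴴ * m = 1) : ‖toOp m‖ ≤ 1 := by
  have h1 : toOp (1 : Matrix ι ι ℂ) = ContinuousLinearMap.id ℂ _ := by
    ext v i; show ((1 : Matrix ι ι ℂ) *ᵥ v) i = v i; rw [Matrix.one_mulVec]
  have h2 := toOp_norm_sq_le m
  rw [h, h1] at h2
  have h3 : ‖toOp m‖ ^ 2 ≤ 1 := h2.trans ContinuousLinearMap.norm_id_le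
  nlinarith [norm_nonneg (toOp m)]

lemma toOp_list_prod_norm_le_one :
    ∀ l : List (Matrix ι ι ℂ), (∀ m ∈ l, ‖toOp m‖ ≤ 1) → ‖toOp l.prod‖ ≤ 1 := by
  intro l
  induction l with
  | nil =>
    intro _
    simp only [List.prod_nil]
    have h1 : toOp (1 : Matrix ι ι ℂ) = ContinuousLinearMap.id ℂ _ := by
      ext v i; show ((1 : Matrix ι ι ℂ) *ᵥ v) i = v i; rw [Matrix.one_mulVec]
    rw [h1]; exact ContinuousLinearMap.norm_id_le
  | cons a t ih =>
    intro h
    rw [List.prod_cons, toOp_mul]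
    calc ‖(toOp a).comp (toOp t.prod)‖ ≤ ‖toOp a‖ * ‖toOp t.prod‖ :=
          ContinuousLinearMap.opNorm_comp_le _ _
      _ ≤ 1 * 1 := by
          apply mul_le_mul (h a (List.mem_cons_self))
            (ih fun m hm => h m (List.mem_cons_of_mem _ hm)) (norm_nonneg _) zero_le_one
      _ = 1 := one_mul 1

lemma toOp_projMat_apply (P : Set ι) [DecidablePred (· ∈ P)] (v : EuclideanSpace ℂ ι) (i : ι) :
    toOp (projMat P) v i = if i ∈ P then v i else 0 := by
  classical
  rw [toOp_apply]
  rw [Finset.sum_eq_single i]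
  · rw [projMat_apply]; by_cases h : i ∈ P <;> simp [h]
  · intro b _ hb; rw [projMat_apply]; simp [Ne.symm hb]
  · simp

lemma toOp_projMat_norm_le (P : Set ι) (v : EuclideanSpace ℂ ι) :
    ‖toOp (projMat P) v‖ ≤ ‖v‖ := by
  classical
  rw [EuclideanSpace.norm_eq, EuclideanSpace.norm_eq]
  apply Real.sqrt_le_sqrt
  apply Finset.sum_le_sum
  intro i _
  rw [toOp_projMat_apply]
  by_cases h : i ∈ P <;> simp [h] <;> positivity

lemma toOp_projMat_norm_le_one (P : Set ι) : ‖toOp (projMat P)‖ ≤ 1 := by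
  apply ContinuousLinearMap.opNorm_le_bound _ zero_le_one
  intro v; rw [one_mul]; exact toOp_projMat_norm_le P v

end OpLemmas

/-- extracting one element from a product of pairwise commuting matrices -/
lemma list_prod_extract {M : Type*} [Monoid M] :
    ∀ (l : List M) (i : ℕ) (hi : i < l.length),
      (∀ a ∈ l, ∀ b ∈ l, Commute a b) →
      l.prod = l.get ⟨i, hi⟩ * (l.set i 1).prod := by
  intro l
  induction l with
  | nil => intro i hi; simp at hi
  | cons a t ih =>
    intro i hi hcomm
    cases i with
    | zero => simp
    | succ n =>
      have hn : n < t.length := by simpa using hi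
      have hcomm' : ∀ x ∈ t, ∀ y ∈ t, Commute x y := fun x hx y hy =>
        hcomm x (List.mem_cons_of_mem _ hx) y (List.mem_cons_of_mem _ hy)
      have hat : Commute a (t.get ⟨n, hn⟩) :=
        hcomm a List.mem_cons_self _ (List.mem_cons_of_mem _ (t.get_mem _))
      calc (a :: t).prod = a * t.prod := List.prod_cons
        _ = a * (t.get ⟨n, hn⟩ * (t.set n 1).prod) := by rw [ih n hn hcomm']
        _ = t.get ⟨n, hn⟩ * (a * (t.set n 1).prod) := by
            rw [← mul_assoc, hat.eq, mul_assoc]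
        _ = (a :: t).get ⟨n+1, hi⟩ * ((a :: t).set (n+1) 1).prod := by
            rw [List.set_cons_succ, List.prod_cons, List.get_cons_succ]

lemma ofFn_set {n : ℕ} {α : Type*} (f : Fin n → α) (i : Fin n) (v : α) :
    (List.ofFn f).set i v = List.ofFn (Function.update f i v) := by
  apply List.ext_getElem
  · simp
  · intro j h1 h2
    have hj : j < n := by simpa using h2
    rw [List.getElem_set, List.getElem_ofFn, List.getElem_ofFn]
    rw [Function.update_apply]
    by_cases h : (i : ℕ) = j
    · rw [if_pos h, if_pos]
      exact Fin.ext (by simp [← h])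
    · rw [if_neg h, if_neg]
      intro hc
      exact h (congrArg Fin.val hc.symm)

section Main
variable {X Y : Type*} [Fintype X] [DecidableEq X] [Fintype Y] [DecidableEq Y] [AddCommGroup Y]

/-- cylinder projections are lifted projections -/
lemma projMat_cyl (x0 : X) (A : Set (Option Y)) [DecidablePred (· ∈ A)] :
    projMat {E : X → Option Y | E x0 ∈ A} = liftMat x0 (projMat A) := by
  classical
  ext D' D
  rw [projMat_apply]
  simp only [liftMat, Matrix.of_apply]
  by_cases hA : ∀ a, a ≠ x0 → D' a = D a
  · rw [if_pos hA, projMat_apply]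
    by_cases hE : D' = D
    · subst hE; simp
    · have h1 : ¬(D' x0 = D x0) := by
        intro hc
        exact hE (funext fun a => if ha : a = x0 then (by rw [ha]; exact hc) else hA a ha)
      simp [hE, h1]
  · rw [if_neg hA, if_neg]
    rintro ⟨rfl, -⟩
    exact hA fun a _ => rfl

/-- norm bound for the lift of a single-row matrix -/
lemma toOp_lift_row_norm_sq_le (x0 : X) (q : Matrix (Option Y) (Option Y) ℂ)
    (hrow : ∀ u, u ≠ some 0 → ∀ v, q u v = 0) :
    ‖toOp (liftMat x0 q)‖ ^ 2 ≤ ∑ t, Complex.normSq (q (some 0) t) := by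
  classical
  set s : ℝ := ∑ t, Complex.normSq (q (some 0) t) with hs
  have hs0 : 0 ≤ s := Finset.sum_nonneg fun t _ => Complex.normSq_nonneg _
  -- outer product identity
  have houter : (qᴴ * q) * (qᴴ * q) = (s : ℂ) • (qᴴ * q) := by
    ext u v
    rw [Matrix.mul_apply, Matrix.smul_apply]
    have hqq : ∀ a b : Option Y, (qᴴ * q) a b = star (q (some 0) a) * q (some 0) b := by
      intro a b
      rw [Matrix.mul_apply]
      rw [Finset.sum_eq_single (some 0)]
      · rw [Matrix.conjTranspose_apply]
      · intro w _ hw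
        rw [Matrix.conjTranspose_apply, hrow w hw, star_zero, zero_mul]
      · simp
    rw [Finset.sum_congr rfl fun t _ => by rw [hqq u t, hqq t v]]
    rw [hqq u v]
    have : ∀ t : Option Y, star (q (some 0) u) * q (some 0) t * (star (q (some 0) t) * q (some 0) v)
        = ((Complex.normSq (q (some 0) t) : ℂ)) * (star (q (some 0) u) * q (some 0) v) := by
      intro t
      rw [← Complex.mul_conj (q (some 0) t)]
      rw [starRingEnd_apply]
      ring
    rw [Finset.sum_congr rfl fun t _ => this t, ← Finset.sum_mul]
    rw [smul_eq_mul]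
    congr 1
    rw [hs]
    push_cast
    rfl
  set N : Matrix (X → Option Y) (X → Option Y) ℂ := liftMat x0 (qᴴ * q) with hN
  have hNH : Nᴴ = N := by
    rw [hN, liftMat_conjTranspose]
    congr 1
    rw [Matrix.conjTranspose_mul, Matrix.conjTranspose_conjTranspose]
  have hNsq : N * N = (s:ℂ) • N := by
    rw [hN, liftMat_mul, houter, liftMat_smul]
  have ha2 : ‖toOp N‖ ^ 2 ≤ s * ‖toOp N‖ := by
    have := toOp_norm_sq_le N
    rw [hNH, hNsq, toOp_smul] at this
    have h4 : ‖(s:ℂ) • toOp N‖ ≤ ‖(s:ℂ)‖ * ‖toOp N‖ := ContinuousLinearMap.opNorm_smul_le _ _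
    have h5 := this.trans h4
    rwa [Complex.norm_real, Real.norm_eq_abs, abs_of_nonneg hs0] at h5
  have haN : ‖toOp N‖ ≤ s := by
    rcases eq_or_lt_of_le (norm_nonneg (toOp N)) with h | h
    · rw [← h]; exact hs0
    · nlinarith
  have := toOp_norm_sq_le (liftMat x0 q)
  rw [liftMat_conjTranspose, liftMat_mul, ← hN] at this
  exact this.trans haN

end Main
end Aux

noncomputable section Final
open Matrix
set_option linter.unusedSectionVars false
set_option maxHeartbeats 1000000

lemma toOp_sum_apply {ι : Type*} [Fintype ι] [DecidableEq ι] {n : ℕ} (m : Fin n → Matrix ι ι ℂ)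
    (v : EuclideanSpace ℂ ι) (D : ι) :
    toOp (∑ i, m i) v D = ∑ i, toOp (m i) v D := by
  rw [toOp_apply]
  simp only [Matrix.sum_apply, Finset.sum_mul]
  rw [Finset.sum_comm]
  apply Finset.sum_congr rfl; intro i _; rw [toOp_apply]

lemma pythagoras {ι : Type*} [Fintype ι] [DecidableEq ι] {n : ℕ} (S : Fin n → Set ι)
    (hdisj : ∀ i j, i ≠ j → ∀ D, D ∈ S i → D ∈ S j → False)
    (C : Fin n → Matrix ι ι ℂ) (b : ℝ) (hb : 0 ≤ b)
    (hC : ∀ i, ‖toOp (projMat (S i) * C i)‖ ≤ b) :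
    ‖toOp (∑ i, projMat (S i) * C i)‖ ≤ Real.sqrt n * b := by
  classical
  apply ContinuousLinearMap.opNorm_le_bound _ (by positivity)
  intro v
  set u : Fin n → EuclideanSpace ℂ ι := fun i => toOp (projMat (S i) * C i) v with hu
  have hsupp : ∀ i D, D ∉ S i → u i D = 0 := by
    intro i D hD
    rw [hu]
    show toOp (projMat (S i) * C i) v D = 0
    rw [toOp_apply]
    apply Finset.sum_eq_zero
    intro E _
    rw [projMat_mul_apply, if_neg hD, zero_mul]
  have key : ∀ D : ι, ‖toOp (∑ i, projMat (S i) * C i) v D‖^2 = ∑ i, ‖u i D‖^2 := by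
    intro D
    rw [toOp_sum_apply]
    by_cases hex : ∃ i, D ∈ S i
    · obtain ⟨i0, hi0⟩ := hex
      have hL : (∑ i, toOp (projMat (S i) * C i) v D) = u i0 D :=
        Finset.sum_eq_single i0
          (fun j _ hj => hsupp j D fun hD => hdisj j i0 hj D hD hi0) (by simp)
      have hR : (∑ i, ‖u i D‖^2) = ‖u i0 D‖^2 :=
        Finset.sum_eq_single i0
          (fun j _ hj => by rw [hsupp j D fun hD => hdisj j i0 hj D hD hi0]; simp) (by simp)
      rw [hL, hR]
    · push_neg at hex
      rw [Finset.sum_eq_zero fun i (_ : i ∈ Finset.univ) => hsupp i D (hex i)]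
      rw [Finset.sum_eq_zero fun i (_ : i ∈ Finset.univ) => by rw [hsupp i D (hex i)]; simp]
      simp
  have h1 : ‖toOp (∑ i, projMat (S i) * C i) v‖^2 = ∑ i, ‖u i‖^2 := by
    rw [EuclideanSpace.norm_eq, Real.sq_sqrt (by positivity)]
    rw [Finset.sum_congr rfl fun D (_ : D ∈ Finset.univ) => key D, Finset.sum_comm]
    apply Finset.sum_congr rfl
    intro i _
    rw [EuclideanSpace.norm_eq, Real.sq_sqrt (by positivity)]
  have h2 : ∀ i, ‖u i‖^2 ≤ (b * ‖v‖)^2 := by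
    intro i
    have h3 : ‖u i‖ ≤ b * ‖v‖ := by
      calc ‖u i‖ ≤ ‖toOp (projMat (S i) * C i)‖ * ‖v‖ :=
            (toOp (projMat (S i) * C i)).le_opNorm v
        _ ≤ b * ‖v‖ := by gcongr; exact hC i
    nlinarith [norm_nonneg (u i), mul_nonneg hb (norm_nonneg v)]
  have h4 : ‖toOp (∑ i, projMat (S i) * C i) v‖^2 ≤ n * (b*‖v‖)^2 := by
    rw [h1]
    calc ∑ i, ‖u i‖^2 ≤ ∑ _i : Fin n, (b*‖v‖)^2 := Finset.sum_le_sum fun i _ => h2 i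
      _ = n * (b*‖v‖)^2 := by
          rw [Finset.sum_const, Finset.card_univ, Fintype.card_fin, nsmul_eq_mul]
  have h5 : Real.sqrt n * b * ‖v‖ = Real.sqrt (n * (b*‖v‖)^2) := by
    rw [Real.sqrt_mul (by positivity), Real.sqrt_sq (by positivity)]
    ring
  rw [h5, ← Real.sqrt_sq (norm_nonneg (toOp (∑ i, projMat (S i) * C i) v))]
  exact Real.sqrt_le_sqrt h4

end Final

set_option maxHeartbeats 4000000 in
theorem stmt_13 {X Y : Type*} [Fintype X] [DecidableEq X] [Nonempty X]
    [Fintype Y] [DecidableEq Y] [AddCommGroup Y]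
    (k : ℕ) (hk : 1 ≤ k) :
    qtc (X := X) (Y := Y) PRMGᶜ PRMG k Set.univ
      ≤ Real.sqrt (10 * k / Fintype.card Y) := by
  classical
  have hM : (0:ℝ) < (Fintype.card Y : ℝ) := card_pos
  have hRHS : (0:ℝ) ≤ Real.sqrt (10 * k / Fintype.card Y) := Real.sqrt_nonneg _
  apply Real.sSup_le _ hRHS
  rintro v ⟨x, c, D, hinj, -, rfl⟩
  rw [← toOp_mul, ← toOp_mul]
  by_cases hD : ∀ a, (∀ i, x i ≠ a) → D a ≠ some 0
  case neg =>
    push_neg at hD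
    obtain ⟨a, ha, ha0⟩ := hD
    have hempty : (PRMGᶜ ∩ agreeOff D x : Set (X → Option Y)) = ∅ := by
      ext E
      simp only [Set.mem_inter_iff, Set.mem_empty_iff_false, iff_false]
      rintro ⟨hE1, hE2⟩
      exact hE1 ⟨a, by rw [hE2 a ha]; exact ha0⟩
    rw [hempty, projMat_empty, Matrix.mul_zero, Matrix.mul_zero, toOp_zero, norm_zero]
    exact hRHS
  case pos =>
    set P : Set (X → Option Y) := PRMGᶜ ∩ agreeOff D x with hP
    set S : Fin k → Set (X → Option Y) := fun i =>
      {E | E ∈ agreeOff D x ∧ E (x i) = some 0 ∧ ∀ j : Fin k, j < i → E (x j) ≠ some 0} with hS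
    have hdisj : ∀ i j, i ≠ j → ∀ E, E ∈ S i → E ∈ S j → False := by
      intro i j hij E hEi hEj
      rcases lt_or_gt_of_ne hij with h | h
      · exact hEj.2.2 i h hEi.2.1
      · exact hEi.2.2 j h hEj.2.1
    have hdisj' : ∀ i j, i ≠ j → S i ∩ S j = ∅ := by
      intro i j hij; ext E
      simp only [Set.mem_inter_iff, Set.mem_empty_iff_false, iff_false]
      rintro ⟨h1, h2⟩; exact hdisj i j hij E h1 h2
    have hcover : (PRMG ∩ agreeOff D x : Set (X → Option Y)) = ⋃ i, S i := by
      ext E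
      simp only [Set.mem_inter_iff, Set.mem_iUnion]
      constructor
      · rintro ⟨⟨a, ha⟩, hE2⟩
        have hexi : ∃ i, E (x i) = some 0 := by
          by_contra hno
          push_neg at hno
          by_cases hax : ∃ i, x i = a
          · obtain ⟨i, rfl⟩ := hax; exact hno i ha
          · push_neg at hax
            exact hD a hax (by rw [← hE2 a hax]; exact ha)
        obtain ⟨i0, hi0, hmin⟩ := Finset.exists_min_image
          (Finset.univ.filter fun i => E (x i) = some 0) id (by
            obtain ⟨i, hi⟩ := hexi
            exact ⟨i, Finset.mem_filter.mpr ⟨Finset.mem_univ _, hi⟩⟩)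
        refine ⟨i0, hE2, (Finset.mem_filter.mp hi0).2, ?_⟩
        intro j hj hj0
        exact absurd (hmin j (Finset.mem_filter.mpr ⟨Finset.mem_univ _, hj0⟩))
          (by simpa using hj)
      · rintro ⟨i, hEi⟩
        exact ⟨⟨x i, hEi.2.1⟩, hEi.1⟩
    rw [hcover, projMat_iUnion S hdisj', Finset.sum_mul]
    have hper : ∀ i : Fin k, ‖toOp (projMat (S i) * (cOparMat x c * projMat P))‖
        ≤ Real.sqrt (8 / (Fintype.card Y : ℝ)) := by
      intro i
      set ppi : Matrix (Option Y) (Option Y) ℂ := projMat {u : Option Y | u = some 0} with hppi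
      set rho : Matrix (Option Y) (Option Y) ℂ := projMat {u : Option Y | u ≠ some 0} with hrho
      set q : Matrix (Option Y) (Option Y) ℂ := ppi * (cOMat (c i) * rho) with hq
      have hrow : ∀ u, u ≠ some 0 → ∀ t, q u t = 0 := by
        intro u hu t
        rw [hq, hppi, projMat_mul_apply, if_neg]
        exact hu
      have hq0 : ∀ t, q (some 0) t = if t = some 0 then 0 else cOMat (c i) (some 0) t := by
        intro t
        rw [hq, hppi, projMat_mul_apply, if_pos (by exact rfl), hrho, mul_projMat_apply]
        by_cases h : t = some 0
        · rw [if_pos h, if_neg]; simpa using h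
        · rw [if_neg h, if_pos]; exact h
      have hsum : ∑ t, Complex.normSq (q (some 0) t) ≤ 8 / (Fintype.card Y : ℝ) := by
        rw [Fintype.sum_option]
        have h8 := row_sq_bound (c i)
        have hn : Complex.normSq (q (some 0) none) = ‖cOMat (c i) (some 0) none‖^2 := by
          rw [hq0 none, if_neg (Option.some_ne_none 0).symm]
          rw [Complex.normSq_eq_norm_sq]
        have hsome : ∀ w : Y, Complex.normSq (q (some 0) (some w))
            = if w = (0:Y) then 0 else ‖cOMat (c i) (some 0) (some w)‖^2 := by
          intro w
          rw [hq0 (some w)]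
          by_cases h : w = 0
          · rw [if_pos (by rw [h]), if_pos h]; simp
          · rw [if_neg (fun hc => h (Option.some_injective _ hc)), if_neg h]
            rw [Complex.normSq_eq_norm_sq]
        rw [hn, Finset.sum_congr rfl fun w (_ : w ∈ Finset.univ) => hsome w]
        exact h8
      have hlift : ‖toOp (liftMat (x i) q)‖ ≤ Real.sqrt (8 / (Fintype.card Y : ℝ)) := by
        have h1 := toOp_lift_row_norm_sq_le (x i) q hrow
        have h2 := h1.trans hsum
        rw [← Real.sqrt_sq (norm_nonneg (toOp (liftMat (x i) q)))]
        exact Real.sqrt_le_sqrt h2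
      -- list decomposition
      set L : Fin k → Matrix (X → Option Y) (X → Option Y) ℂ :=
        fun j => liftMat (x j) (cOMat (c j)) with hL
      have hcomm : ∀ a ∈ List.ofFn L, ∀ b ∈ List.ofFn L, Commute a b := by
        intro a ha b hb
        rw [List.mem_ofFn] at ha hb
        obtain ⟨ja, rfl⟩ := ha; obtain ⟨jb, rfl⟩ := hb
        by_cases h : ja = jb
        · subst h; exact Commute.refl _
        · exact liftMat_commute _ _ (fun hc => h (hinj hc)) _ _
      set rest : Matrix (X → Option Y) (X → Option Y) ℂ :=
        (List.ofFn (Function.update L i (1 : Matrix (X → Option Y) (X → Option Y) ℂ))).prod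
        with hrest
      have hsplit : cOparMat x c = L i * rest := by
        rw [cOparMat]
        have hlen : (i : ℕ) < (List.ofFn L).length := by simp [i.isLt]
        have hx := list_prod_extract (List.ofFn L) i hlen hcomm
        rw [show (List.ofFn fun j : Fin k => liftMat (x j) (cOMat (c j))) = List.ofFn L from rfl]
        rw [hx, List.get_ofFn, ofFn_set, hrest]
        congr 1
      have hrestnorm : ‖toOp rest‖ ≤ 1 := by
        rw [hrest]
        apply toOp_list_prod_norm_le_one
        intro m hm
        rw [List.mem_ofFn] at hm
        obtain ⟨j, rfl⟩ := hm
        rw [Function.update_apply]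
        by_cases h : j = i
        · rw [if_pos h]
          exact toOp_norm_le_one_of_unitary _
            (by rw [Matrix.conjTranspose_one, Matrix.one_mul])
        · rw [if_neg h, hL]
          apply toOp_norm_le_one_of_unitary
          rw [liftMat_conjTranspose, liftMat_mul, cOMat_unitary, liftMat_one]
      have hTi : projMat {E : X → Option Y | E (x i) = some 0} = liftMat (x i) ppi :=
        projMat_cyl (x i) {u : Option Y | u = some 0}
      have hRi : projMat {E : X → Option Y | E (x i) ≠ some 0} = liftMat (x i) rho :=
        projMat_cyl (x i) {u : Option Y | u ≠ some 0}
      have hρcomm : Commute (liftMat (x i) rho) rest := by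
        rw [hrest]
        apply Commute.list_prod_right
        intro y hy
        rw [List.mem_ofFn] at hy
        obtain ⟨j, rfl⟩ := hy
        rw [Function.update_apply]
        by_cases h : j = i
        · rw [if_pos h]; exact Commute.one_right _
        · rw [if_neg h, hL]
          exact liftMat_commute (x i) (x j) (fun hc => h (hinj hc).symm) rho (cOMat (c j))
      have hGsplit : projMat {E : X → Option Y | E (x i) = some 0} * cOparMat x c
            * projMat {E : X → Option Y | E (x i) ≠ some 0}
          = liftMat (x i) q * rest := by
        rw [hTi, hRi, hsplit, hL]
        calc liftMat (x i) ppi * (liftMat (x i) (cOMat (c i)) * rest) * liftMat (x i) rho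
            = (liftMat (x i) ppi * liftMat (x i) (cOMat (c i))) * (rest * liftMat (x i) rho) := by
              simp only [Matrix.mul_assoc]
          _ = liftMat (x i) (ppi * cOMat (c i)) * (liftMat (x i) rho * rest) := by
              rw [liftMat_mul, hρcomm.eq]
          _ = (liftMat (x i) (ppi * cOMat (c i)) * liftMat (x i) rho) * rest := by
              simp only [Matrix.mul_assoc]
          _ = liftMat (x i) (ppi * cOMat (c i) * rho) * rest := by rw [liftMat_mul]
          _ = liftMat (x i) q * rest := by rw [hq, Matrix.mul_assoc]
      have hGnorm : ‖toOp (projMat {E : X → Option Y | E (x i) = some 0} * cOparMat x c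
            * projMat {E : X → Option Y | E (x i) ≠ some 0})‖
          ≤ Real.sqrt (8 / (Fintype.card Y : ℝ)) := by
        rw [hGsplit, toOp_mul]
        calc ‖(toOp (liftMat (x i) q)).comp (toOp rest)‖
            ≤ ‖toOp (liftMat (x i) q)‖ * ‖toOp rest‖ := ContinuousLinearMap.opNorm_comp_le _ _
          _ ≤ Real.sqrt (8 / (Fintype.card Y : ℝ)) * 1 :=
              mul_le_mul hlift hrestnorm (norm_nonneg _) (Real.sqrt_nonneg _)
          _ = Real.sqrt (8 / (Fintype.card Y : ℝ)) := mul_one _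
      -- absorption
      have hSsub : S i ⊆ {E : X → Option Y | E (x i) = some 0} := fun E hE => hE.2.1
      have hPsub : P ⊆ {E : X → Option Y | E (x i) ≠ some 0} := by
        rintro E ⟨hE1, -⟩ hc
        exact hE1 ⟨x i, hc⟩
      have habs1 : projMat (S i) * projMat {E : X → Option Y | E (x i) = some 0}
          = projMat (S i) := projMat_absorb_right hSsub
      have habs2 : projMat {E : X → Option Y | E (x i) ≠ some 0} * projMat P
          = projMat P := projMat_absorb_left hPsub
      have hmid : projMat (S i) * (cOparMat x c * projMat P)
          = projMat (S i) * ((projMat {E : X → Option Y | E (x i) = some 0} * cOparMat x c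
              * projMat {E : X → Option Y | E (x i) ≠ some 0}) * projMat P) := by
        conv_lhs => rw [← habs1, ← habs2]
        simp only [Matrix.mul_assoc]
      rw [hmid, toOp_mul, toOp_mul]
      calc ‖(toOp (projMat (S i))).comp ((toOp (projMat {E : X → Option Y | E (x i) = some 0}
              * cOparMat x c * projMat {E : X → Option Y | E (x i) ≠ some 0})).comp
              (toOp (projMat P)))‖
          ≤ ‖toOp (projMat (S i))‖ * (‖toOp (projMat {E : X → Option Y | E (x i) = some 0}
              * cOparMat x c * projMat {E : X → Option Y | E (x i) ≠ some 0})‖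
              * ‖toOp (projMat P)‖) := by
            calc _ ≤ ‖toOp (projMat (S i))‖ * ‖(toOp (projMat {E : X → Option Y | E (x i) = some 0}
                  * cOparMat x c * projMat {E : X → Option Y | E (x i) ≠ some 0})).comp
                  (toOp (projMat P))‖ := ContinuousLinearMap.opNorm_comp_le _ _
              _ ≤ _ := by
                  gcongr
                  exact ContinuousLinearMap.opNorm_comp_le _ _
        _ ≤ 1 * (Real.sqrt (8 / (Fintype.card Y : ℝ)) * 1) := by
            apply mul_le_mul (toOp_projMat_norm_le_one _)
            · exact mul_le_mul hGnorm (toOp_projMat_norm_le_one _) (norm_nonneg _)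
                (Real.sqrt_nonneg _)
            · positivity
            · exact zero_le_one
        _ = Real.sqrt (8 / (Fintype.card Y : ℝ)) := by ring
    calc ‖toOp (∑ i, projMat (S i) * (cOparMat x c * projMat P))‖
        ≤ Real.sqrt k * Real.sqrt (8 / (Fintype.card Y : ℝ)) :=
          pythagoras S hdisj _ _ (Real.sqrt_nonneg _) hper
      _ = Real.sqrt (k * (8 / (Fintype.card Y : ℝ))) := by
          rw [← Real.sqrt_mul (by positivity)]
      _ ≤ Real.sqrt (10 * k / Fintype.card Y) := by
          apply Real.sqrt_le_sqrt
          rw [show (k:ℝ) * (8 / (Fintype.card Y : ℝ)) = 8 * k / (Fintype.card Y : ℝ) by ring]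
          gcongr
          nlinarith [Nat.cast_nonneg (α := ℝ) k]
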